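/- Let G be a second-countable profinite group, μ the normalized Haar probability measure on G, and T : G → G a quotient-preserving map. Then T is measure-preserving with respect to μ if and only if T is surjective. -/

import Mathlib

open MeasureTheory Pointwise

/-- `T` factors through the quotient map `G → G/N`. -/
def MapFactorsThrough {G : Type*} [Group G] (T : G → G) (N : Subgroup G) : Prop :=
  ∀ x y : G, x⁻¹ * y ∈ N → (T x)⁻¹ * T y ∈ N

/-- `T` is a quotient-preserving map: the open normal subgroups through whose quotient
maps `T` factors contain a base of neighborhoods of the identity. -/
def QuotientPreserving {G : Type*} [Group G] [TopologicalSpace G] (T : G → G) : Prop :=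
  ∀ U ∈ nhds (1 : G), ∃ N : Subgroup G,
    N.Normal ∧ IsOpen (N : Set G) ∧ (N : Set G) ⊆ U ∧ MapFactorsThrough T N

section Aux

set_option linter.unusedSectionVars false

variable {G : Type*} [Group G] [TopologicalSpace G] [IsTopologicalGroup G]

lemma mem_preimage_mk_singleton {N : Subgroup G} {g x : G} :
    x ∈ QuotientGroup.mk ⁻¹' ({(g : G ⧸ N)} : Set (G ⧸ N)) ↔ x⁻¹ * g ∈ N := by
  simp only [Set.mem_preimage, Set.mem_singleton_iff]
  exact QuotientGroup.eq

lemma isOpen_preimage_mk {N : Subgroup G} (hN : IsOpen (N : Set G)) (A : Set (G ⧸ N)) :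
    IsOpen (QuotientGroup.mk ⁻¹' A) := by
  rw [isOpen_iff_forall_mem_open]
  intro x hx
  refine ⟨x • (N : Set G), ?_, hN.smul x, ?_⟩
  · intro y hy
    rw [Set.mem_smul_set_iff_inv_smul_mem] at hy
    have : (QuotientGroup.mk y : G ⧸ N) = QuotientGroup.mk x :=
      (QuotientGroup.eq).mpr (by simpa using (N.inv_mem hy))
    simpa [Set.mem_preimage, this] using hx
  · rw [Set.mem_smul_set_iff_inv_smul_mem]; simpa using N.one_mem

lemma saturated_preimage_image {N : Subgroup G} {S : Set G}
    (h : ∀ x y : G, x ∈ S → x⁻¹ * y ∈ N → y ∈ S) :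
    QuotientGroup.mk ⁻¹' ((QuotientGroup.mk '' S : Set (G ⧸ N))) = S := by
  ext y
  simp only [Set.mem_preimage, Set.mem_image]
  constructor
  · rintro ⟨x, hxS, hxy⟩
    exact h x y hxS ((QuotientGroup.eq).mp hxy)
  · exact fun hy => ⟨y, hy, rfl⟩

lemma quotientPreserving_continuous {T : G → G} (hT : QuotientPreserving T) :
    Continuous T := by
  rw [continuous_def]
  intro U hU
  rw [isOpen_iff_forall_mem_open]
  intro x hx
  have hUx : (fun h => T x * h) ⁻¹' U ∈ nhds (1 : G) := by
    have : Continuous (fun h : G => T x * h) := continuous_const.mul continuous_id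
    exact (this.isOpen_preimage U hU).mem_nhds (by simpa using hx)
  obtain ⟨N, -, hNo, hNU, hNf⟩ := hT _ hUx
  refine ⟨x • (N : Set G), ?_, hNo.smul x, ?_⟩
  · intro y hy
    rw [Set.mem_smul_set_iff_inv_smul_mem] at hy
    have := hNf x y (by simpa using hy)
    have := hNU this
    simpa using this
  · rw [Set.mem_smul_set_iff_inv_smul_mem]; simpa using N.one_mem

variable [MeasurableSpace G] [BorelSpace G]

lemma measure_preimage_mk_singleton (μ : Measure G) [μ.IsHaarMeasure]
    (N : Subgroup G) (g : G) :
    μ (QuotientGroup.mk ⁻¹' ({(g : G ⧸ N)} : Set (G ⧸ N))) = μ (N : Set G) := by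
  have hset : QuotientGroup.mk ⁻¹' ({(g : G ⧸ N)} : Set (G ⧸ N))
      = (fun h => g⁻¹ * h) ⁻¹' (N : Set G) := by
    ext x
    rw [mem_preimage_mk_singleton]
    simp only [Set.mem_preimage, SetLike.mem_coe]
    constructor
    · intro h; simpa using N.inv_mem h
    · intro h; simpa using N.inv_mem h
  rw [hset, measure_preimage_mul]

lemma measure_preimage_mk [CompactSpace G] (μ : Measure G) [μ.IsHaarMeasure]
    (N : Subgroup G) (hN : IsOpen (N : Set G)) (A : Set (G ⧸ N)) :
    μ (QuotientGroup.mk ⁻¹' A) = A.ncard * μ (N : Set G) := by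
  have : Finite (G ⧸ N) := N.quotient_finite_of_isOpen hN
  classical
  have hA : A.Finite := Set.toFinite A
  have hcover : QuotientGroup.mk ⁻¹' A = ⋃ q ∈ hA.toFinset, QuotientGroup.mk ⁻¹' {q} := by
    ext x; simp
  rw [hcover, measure_biUnion_finset]
  · have hterm : ∀ q ∈ hA.toFinset,
        μ (QuotientGroup.mk ⁻¹' ({q} : Set (G ⧸ N))) = μ (N : Set G) := by
      intro q _
      have : q = ((q.out : G) : G ⧸ N) := (QuotientGroup.out_eq' q).symm
      rw [this, measure_preimage_mk_singleton]
    rw [Finset.sum_congr rfl hterm, Finset.sum_const, Set.ncard_eq_toFinset_card A hA]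
    simp [nsmul_eq_mul]
  · intro q _ r _ hqr
    simp only [Function.onFun]
    apply Set.disjoint_left.mpr
    intro x hx hx'
    simp only [Set.mem_preimage, Set.mem_singleton_iff] at hx hx'
    exact hqr (hx ▸ hx')
  · intro q _
    exact (isOpen_preimage_mk hN {q}).measurableSet

end Aux

theorem stmt2 {G : Type*} [Group G] [TopologicalSpace G] [IsTopologicalGroup G]
    [CompactSpace G] [T2Space G] [TotallyDisconnectedSpace G]
    [SecondCountableTopology G]
    [MeasurableSpace G] [BorelSpace G]
    (μ : Measure G) [μ.IsHaarMeasure] [IsProbabilityMeasure μ]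
    (T : G → G) (hT : QuotientPreserving T) :
    (∀ S : Set G, MeasurableSet S → μ (T ⁻¹' S) = μ S) ↔ Function.Surjective T := by
  constructor
  · -- measure preserving → surjective
    intro hm g
    set ι := {N : Subgroup G // N.Normal ∧ IsOpen (N : Set G) ∧ MapFactorsThrough T N} with hι
    have hne : Nonempty ι := by
      obtain ⟨N, hn, ho, -, hf⟩ := hT Set.univ Filter.univ_mem
      exact ⟨⟨N, hn, ho, hf⟩⟩
    set Z : ι → Set G := fun N => {x | (T x)⁻¹ * g ∈ N.1} with hZ
    have hsat : ∀ N : ι, ∀ x y : G, x ∈ Z N → x⁻¹ * y ∈ N.1 → y ∈ Z N := by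
      intro N x y hx hxy
      have h1 : (T x)⁻¹ * T y ∈ N.1 := N.2.2.2 x y hxy
      have : (T y)⁻¹ * g = ((T x)⁻¹ * T y)⁻¹ * ((T x)⁻¹ * g) := by group
      rw [hZ]; simp only [Set.mem_setOf_eq]
      rw [this]
      exact N.1.mul_mem (N.1.inv_mem h1) hx
    have hZeq : ∀ N : ι,
        Z N = QuotientGroup.mk ⁻¹' ((QuotientGroup.mk '' Z N : Set (G ⧸ N.1))) :=
      fun N => (saturated_preimage_image (hsat N)).symm
    have hZopen : ∀ N : ι, IsOpen (Z N) := fun N => (hZeq N) ▸ isOpen_preimage_mk N.2.2.1 _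
    have hZclosed : ∀ N : ι, IsClosed (Z N) := by
      intro N
      rw [hZeq N, ← isOpen_compl_iff, ← Set.preimage_compl]
      exact isOpen_preimage_mk N.2.2.1 _
    have hZnonempty : ∀ N : ι, (Z N).Nonempty := by
      intro N
      have hset : Z N = T ⁻¹' (QuotientGroup.mk ⁻¹' ({(g : G ⧸ N.1)} : Set (G ⧸ N.1))) := by
        ext x; rw [hZ]; simp only [Set.mem_setOf_eq, Set.mem_preimage]
        exact (mem_preimage_mk_singleton (N := N.1)).symm
      have hmeas : MeasurableSet (QuotientGroup.mk ⁻¹' ({(g : G ⧸ N.1)} : Set (G ⧸ N.1))) :=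
        (isOpen_preimage_mk N.2.2.1 _).measurableSet
      have hpos : 0 < μ (QuotientGroup.mk ⁻¹' ({(g : G ⧸ N.1)} : Set (G ⧸ N.1))) := by
        rw [measure_preimage_mk_singleton]
        exact N.2.2.1.measure_pos μ ⟨1, N.1.one_mem⟩
      apply nonempty_of_measure_ne_zero (μ := μ)
      rw [hset, hm _ hmeas]
      exact hpos.ne'
    have hdir : Directed (· ⊇ ·) Z := by
      intro N₁ N₂
      have hV : (N₁.1 : Set G) ∩ (N₂.1 : Set G) ∈ nhds (1 : G) :=
        ((N₁.2.2.1.inter N₂.2.2.1)).mem_nhds ⟨N₁.1.one_mem, N₂.1.one_mem⟩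
      obtain ⟨N, hn, ho, hsub, hf⟩ := hT _ hV
      refine ⟨⟨N, hn, ho, hf⟩, ?_, ?_⟩
      · intro x hx; exact (hsub hx).1
      · intro x hx; exact (hsub hx).2
    obtain ⟨x, hx⟩ := IsCompact.nonempty_iInter_of_directed_nonempty_isCompact_isClosed
      Z hdir hZnonempty (fun N => (hZclosed N).isCompact) hZclosed
    refine ⟨x, ?_⟩
    by_contra hne'
    have hone : (T x)⁻¹ * g ≠ 1 := fun h => hne' (inv_mul_eq_one.mp h)
    have hU : ({(T x)⁻¹ * g}ᶜ : Set G) ∈ nhds (1 : G) :=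
      (isOpen_compl_singleton).mem_nhds (by simpa using (Ne.symm hone))
    obtain ⟨N, hn, ho, hsub, hf⟩ := hT _ hU
    have : x ∈ Z ⟨N, hn, ho, hf⟩ := Set.mem_iInter.mp hx _
    exact hsub this rfl
  · -- surjective → measure preserving
    intro hsurj S hS
    have hcont : Continuous T := quotientPreserving_continuous hT
    have hmeasT : Measurable T := hcont.measurable
    set ν := μ.map T with hν
    have hprob : IsProbabilityMeasure ν := Measure.isProbabilityMeasure_map hmeasT.aemeasurable
    set P : Set (Set G) := {S | ∃ N : Subgroup G, N.Normal ∧ IsOpen (N : Set G) ∧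
      MapFactorsThrough T N ∧ ∃ A : Set (G ⧸ N), S = QuotientGroup.mk ⁻¹' A} with hP
    -- every element of P is open
    have hPopen : ∀ S ∈ P, IsOpen S := by
      rintro S ⟨N, -, ho, -, A, rfl⟩
      exact isOpen_preimage_mk ho A
    -- P is a pi-system
    have hpi : IsPiSystem P := by
      rintro S₁ ⟨N₁, -, ho₁, -, A₁, rfl⟩ S₂ ⟨N₂, -, ho₂, -, A₂, rfl⟩ -
      have hV : (N₁ : Set G) ∩ (N₂ : Set G) ∈ nhds (1 : G) :=
        ((ho₁.inter ho₂)).mem_nhds ⟨N₁.one_mem, N₂.one_mem⟩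
      obtain ⟨N, hn, ho, hsub, hf⟩ := hT _ hV
      refine ⟨N, hn, ho, hf, QuotientGroup.mk ''
        (QuotientGroup.mk ⁻¹' A₁ ∩ QuotientGroup.mk ⁻¹' A₂), ?_⟩
      rw [saturated_preimage_image]
      intro x y hx hxy
      have h1 : (QuotientGroup.mk x : G ⧸ N₁) = QuotientGroup.mk y :=
        (QuotientGroup.eq).mpr (hsub hxy).1
      have h2 : (QuotientGroup.mk x : G ⧸ N₂) = QuotientGroup.mk y :=
        (QuotientGroup.eq).mpr (hsub hxy).2
      exact ⟨by rw [Set.mem_preimage, ← h1]; exact hx.1,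
             by rw [Set.mem_preimage, ← h2]; exact hx.2⟩
    -- P generates the Borel sigma-algebra
    have hgen : (inferInstance : MeasurableSpace G) = MeasurableSpace.generateFrom P := by
      have hb : borel G = MeasurableSpace.generateFrom {s : Set G | IsOpen s} := rfl
      rw [BorelSpace.measurable_eq (α := G), hb]
      apply le_antisymm
      · apply MeasurableSpace.generateFrom_le
        intro U hU
        set 𝒮 : Set (Set G) := {V | V ∈ P ∧ V ⊆ U} with h𝒮
        have hUeq : U = ⋃₀ 𝒮 := by
          apply Set.eq_of_subset_of_subset
          · intro x hx
            have hUx : (fun h => x * h) ⁻¹' U ∈ nhds (1 : G) := by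
              have hc : Continuous (fun h : G => x * h) := continuous_const.mul continuous_id
              exact (hc.isOpen_preimage U hU).mem_nhds (by simpa using hx)
            obtain ⟨N, hn, ho, hNU, hf⟩ := hT _ hUx
            refine ⟨QuotientGroup.mk ⁻¹' ({(x : G ⧸ N)} : Set (G ⧸ N)), ⟨⟨N, hn, ho, hf, _, rfl⟩, ?_⟩, ?_⟩
            · intro y hy
              rw [mem_preimage_mk_singleton] at hy
              have := hNU (N.inv_mem hy)
              simpa using this
            · rw [mem_preimage_mk_singleton]; simpa using N.one_mem
          · intro x hx
            obtain ⟨V, hV, hxV⟩ := hx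
            exact hV.2 hxV
        obtain ⟨𝒯, h𝒯count, h𝒯sub, h𝒯eq⟩ := TopologicalSpace.isOpen_sUnion_countable 𝒮
          (fun V hV => hPopen V hV.1)
        rw [hUeq, ← h𝒯eq]
        exact MeasurableSet.sUnion h𝒯count
          (fun V hV => MeasurableSpace.measurableSet_generateFrom (h𝒯sub hV).1)
      · apply MeasurableSpace.generateFrom_le
        intro S hS'
        exact MeasurableSpace.measurableSet_generateFrom (hPopen S hS')
    -- measures agree on P
    have hagree : ∀ s ∈ P, ν s = μ s := by
      rintro s ⟨N, hn, ho, hf, A, rfl⟩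
      have hfin : Finite (G ⧸ N) := N.quotient_finite_of_isOpen ho
      -- induced map on the quotient
      set T' : G ⧸ N → G ⧸ N := Quotient.map' T (fun x y h => by
        rw [QuotientGroup.leftRel_apply] at h ⊢
        exact hf x y h) with hT'
      have hcomm : ∀ x : G, T' (QuotientGroup.mk x) = QuotientGroup.mk (T x) :=
        fun x => rfl
      have hT'surj : Function.Surjective T' := by
        intro q
        obtain ⟨y, rfl⟩ := QuotientGroup.mk_surjective q
        obtain ⟨x, rfl⟩ := hsurj y
        exact ⟨QuotientGroup.mk x, hcomm x⟩
      have hT'bij : Function.Bijective T' := Finite.surjective_iff_bijective.mp hT'surj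
      have hpre : T ⁻¹' (QuotientGroup.mk ⁻¹' A) = QuotientGroup.mk ⁻¹' (T' ⁻¹' A) := by
        ext x
        simp only [Set.mem_preimage, hcomm]
      have hcard : (T' ⁻¹' A).ncard = A.ncard := by
        have himg : T' '' (T' ⁻¹' A) = A := Set.image_preimage_eq A hT'bij.surjective
        calc (T' ⁻¹' A).ncard = (T' '' (T' ⁻¹' A)).ncard :=
              (Set.ncard_image_of_injective _ hT'bij.injective).symm
          _ = A.ncard := by rw [himg]
      rw [hν, Measure.map_apply hmeasT (isOpen_preimage_mk ho A).measurableSet,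
        hpre, measure_preimage_mk μ N ho, measure_preimage_mk μ N ho, hcard]
    have hext : ν = μ := MeasureTheory.ext_of_generate_finite P hgen hpi hagree
      (by simp [measure_univ])
    have h2 : ν S = μ S := by rw [hext]
    rw [hν, Measure.map_apply hmeasT hS] at h2
    exact h2
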